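/- Let (hat{Q}, hat{pi}) be a partitioned framed quiver and sigma a sequence of component preserving mutations. For any mutable vertex v in block pi_i, the vertex v is green (respectively red) in mu_sigma(hat{Q}) if and only if it is green (respectively red) in the restriction mu_sigma(hat{Q})_i of mu_sigma(hat{Q}) to the block containing v. -/

import Mathlib

/-- Fomin–Zelevinsky matrix mutation at index `k`. -/
def mutB {V : Type*} [DecidableEq V] (k : V) (B : V → V → ℤ) : V → V → ℤ :=
  fun i j =>
    if i = k ∨ j = k then -B i j
    else B i j + Int.sign (B i k) * max (B i k * B k j) 0

/-- Apply a sequence of mutations (left to right). -/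
def mutSeq {V : Type*} [DecidableEq V] (σ : List V) (B : V → V → ℤ) : V → V → ℤ :=
  σ.foldl (fun M k => mutB k M) B

/-- The framed quiver of `B`: mutable vertices `Sum.inl`, frozen vertices `Sum.inr`. -/
def framed {V : Type*} [DecidableEq V] (B : V → V → ℤ) : (V ⊕ V) → (V ⊕ V) → ℤ
  | Sum.inl i, Sum.inl j => B i j
  | Sum.inl i, Sum.inr j => if i = j then 1 else 0
  | Sum.inr i, Sum.inl j => if i = j then -1 else 0
  | Sum.inr _, Sum.inr _ => 0

/-- Apply a sequence of mutations at mutable vertices to an ice matrix on `V ⊕ V`. -/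
def mutFr {V : Type*} [DecidableEq V] (σ : List V) (M : (V ⊕ V) → (V ⊕ V) → ℤ) :
    (V ⊕ V) → (V ⊕ V) → ℤ :=
  σ.foldl (fun N k => mutB (Sum.inl k) N) M

/-- A mutable vertex is green if no frozen vertex has an arrow into it. -/
def IsGreen {V : Type*} (M : (V ⊕ V) → (V ⊕ V) → ℤ) (v : V) : Prop :=
  ∀ f, 0 ≤ M (Sum.inl v) (Sum.inr f)

/-- A mutable vertex is red if it has no arrows to frozen vertices. -/
def IsRed {V : Type*} (M : (V ⊕ V) → (V ⊕ V) → ℤ) (v : V) : Prop :=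
  ∀ f, M (Sum.inl v) (Sum.inr f) ≤ 0

/-- A reddening sequence: after mutating the framed quiver, all mutable vertices are red. -/
def IsRedSeq {V : Type*} [DecidableEq V] (B : V → V → ℤ) (σ : List V) : Prop :=
  ∀ v, IsRed (mutFr σ (framed B)) v

/-- A maximal green sequence: a reddening sequence each of whose mutations is at a green vertex. -/
def IsMGS {V : Type*} [DecidableEq V] (B : V → V → ℤ) (σ : List V) : Prop :=
  IsRedSeq B σ ∧ ∀ t (h : t < σ.length), IsGreen (mutFr (σ.take t) (framed B)) (σ[t]'h)

/-- A mutable vertex `k` is component preserving with respect to the block map `π`. -/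
def CompPres {V ι : Type*} (π : V → ι) (M : (V ⊕ V) → (V ⊕ V) → ℤ) (k : V) : Prop :=
  ((∃ f, 0 < M (Sum.inl k) (Sum.inr f)) →
    ∀ a, 0 < M (Sum.inl a) (Sum.inl k) → π a = π k) ∧
  ((∃ f, M (Sum.inl k) (Sum.inr f) < 0) →
    ∀ a, 0 < M (Sum.inl k) (Sum.inl a) → π a = π k)

/-- Every step of the sequence mutates at a component preserving vertex. -/
def CompPresSeq {V ι : Type*} [DecidableEq V] (π : V → ι) (σ : List V)
    (M : (V ⊕ V) → (V ⊕ V) → ℤ) : Prop :=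
  ∀ t (h : t < σ.length), CompPres π (mutFr (σ.take t) M) (σ[t]'h)

lemma sign_mul_max (a b : ℤ) : a.sign * max (a*b) 0 = b.sign * max (a*b) 0 := by
  rcases le_or_gt (a*b) 0 with h | h
  · simp [max_eq_right h]
  · rw [max_eq_left h.le]
    rcases mul_pos_iff.mp h with ⟨ha, hb⟩ | ⟨ha, hb⟩
    · rw [Int.sign_eq_one_iff_pos.mpr ha, Int.sign_eq_one_iff_pos.mpr hb]
    · rw [Int.sign_eq_neg_one_iff_neg.mpr ha, Int.sign_eq_neg_one_iff_neg.mpr hb]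

lemma mutB_skew {W : Type*} [DecidableEq W] (k : W) (M : W → W → ℤ)
    (h : ∀ i j, M j i = -M i j) : ∀ i j, mutB k M j i = -(mutB k M i j) := by
  intro i j
  unfold mutB
  by_cases hik : i = k
  · subst hik
    simp only [or_true, true_or, if_true]
    rw [h i j]
  by_cases hjk : j = k
  · subst hjk
    simp only [or_true, true_or, if_true]
    rw [h i j]
  · simp only [hik, hjk, or_self, if_false]
    have hs := sign_mul_max (M i k) (M k j)
    rw [h i j, h k j, h i k, Int.sign_neg, neg_mul_neg, mul_comm (M k j)]
    linarith

/-- Off-block frozen entries vanish. -/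
def BlockZero {V ι : Type*} (π : V → ι) (M : (V ⊕ V) → (V ⊕ V) → ℤ) : Prop :=
  ∀ v f, π f ≠ π v → M (Sum.inl v) (Sum.inr f) = 0

lemma BZ_mutB {V ι : Type*} [DecidableEq V] (π : V → ι)
    (M : (V ⊕ V) → (V ⊕ V) → ℤ)
    (hs : ∀ i j, M j i = -M i j) (hbz : BlockZero π M) (k : V)
    (hk : CompPres π M k) : BlockZero π (mutB (Sum.inl k) M) := by
  intro v f hvf
  unfold mutB
  by_cases hvk : v = k
  · subst hvk
    simp only [true_or, if_true, hbz v f hvf, neg_zero]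
  · have hne : ¬((Sum.inl v : V ⊕ V) = Sum.inl k ∨ (Sum.inr f : V ⊕ V) = Sum.inl k) := by
      rintro (h | h)
      · exact hvk (Sum.inl.inj h)
      · cases h
    rw [if_neg hne, hbz v f hvf, zero_add]
    rcases le_or_gt (M (Sum.inl v) (Sum.inl k) * M (Sum.inl k) (Sum.inr f)) 0 with h | h
    · simp [max_eq_right h]
    · exfalso
      rcases mul_pos_iff.mp h with ⟨ha, hb⟩ | ⟨ha, hb⟩
      · -- M k f > 0, M v k > 0 : first condition of CompPres
        have hπ := hk.1 ⟨f, hb⟩ v ha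
        -- π f = π k since M k f ≠ 0
        by_cases hfk : π f = π k
        · exact hvf (hfk.trans hπ.symm)
        · exact absurd (hbz k f hfk) (by omega)
      · have hkv : 0 < M (Sum.inl k) (Sum.inl v) := by
          rw [hs (Sum.inl v) (Sum.inl k)]; omega
        have hπ := hk.2 ⟨f, hb⟩ v hkv
        by_cases hfk : π f = π k
        · exact hvf (hfk.trans hπ.symm)
        · exact absurd (hbz k f hfk) (by omega)

lemma BZ_mutFr {V ι : Type*} [DecidableEq V] (π : V → ι) (σ : List V) :
    ∀ (M : (V ⊕ V) → (V ⊕ V) → ℤ),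
    (∀ i j, M j i = -M i j) → BlockZero π M → CompPresSeq π σ M →
    BlockZero π (mutFr σ M) := by
  induction σ with
  | nil => intro M _ hbz _; exact hbz
  | cons k σ ih =>
    intro M hs hbz hcp
    have h0 : CompPres π M k := by
      exact hcp 0 (by simp)
    have hstep : mutFr (k :: σ) M = mutFr σ (mutB (Sum.inl k) M) := by
      simp [mutFr]
    rw [hstep]
    refine ih _ (mutB_skew _ _ hs) (BZ_mutB π M hs hbz k h0) ?_
    intro t ht
    have := hcp (t+1) (by simpa using Nat.succ_lt_succ ht)
    simpa [mutFr, List.take_succ_cons] using this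

/-- after a component preserving sequence of mutations, a mutable vertex is
green (resp. red) in the whole quiver iff it is green (resp. red) in the restriction of
the quiver to its own block. -/
theorem color_local {V ι : Type*} [DecidableEq V]
    (B : V → V → ℤ) (hskew : ∀ i j, B j i = -B i j)
    (π : V → ι) (σ : List V)
    (hcp : CompPresSeq π σ (framed B)) (v : V) :
    (IsGreen (mutFr σ (framed B)) v ↔
      ∀ f, π f = π v → 0 ≤ mutFr σ (framed B) (Sum.inl v) (Sum.inr f)) ∧
    (IsRed (mutFr σ (framed B)) v ↔
      ∀ f, π f = π v → mutFr σ (framed B) (Sum.inl v) (Sum.inr f) ≤ 0) := by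
  have hs : ∀ i j, framed B j i = -(framed B i j) := by
    rintro (i | i) (j | j)
    · exact hskew i j
    · by_cases h : i = j
      · subst h; simp [framed]
      · simp [framed, h, Ne.symm h]
    · by_cases h : i = j
      · subst h; simp [framed]
      · simp [framed, h, Ne.symm h]
    · simp [framed]
  have hbz0 : BlockZero π (framed B) := by
    intro w f hne
    have : w ≠ f := fun h => hne (by rw [h])
    simp [framed, this]
  have hbz := BZ_mutFr π σ (framed B) hs hbz0 hcp
  constructor
  · constructor
    · exact fun h f _ => h f
    · intro h f
      by_cases hf : π f = π v
      · exact h f hf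
      · rw [hbz v f hf]
  · constructor
    · exact fun h f _ => h f
    · intro h f
      by_cases hf : π f = π v
      · exact h f hf
      · rw [hbz v f hf]
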